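/- Consider the Emax model with parameters θ = (θ₁, θ₂, θ₃), θ₂ > 0, θ₃ > 0, on the design region [L,U] with 0 < L < U. Let x_E* = (L(U+θ₃) + U(L+θ₃))/(L + U + 2θ₃). The design ξ* that puts weight 1/3 at each of the three points L, x_E*, and U satisfies det M_{ξ*} ≥ det M_ξ for every design ξ on [L,U]; that is, ξ* is D-optimal. Moreover L < x_E* < U. -/

import Mathlib

structure Design (I : Set ℝ) where
  pts : Finset ℝ
  w : ℝ → ℝ
  mem_pts : ∀ x ∈ pts, x ∈ I
  w_nonneg : ∀ x ∈ pts, 0 ≤ w x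
  w_sum : ∑ x ∈ pts, w x = 1

noncomputable def infoMat {d : ℕ} (M : ℝ → Matrix (Fin d) (Fin d) ℝ) {I : Set ℝ}
    (ξ : Design I) : Matrix (Fin d) (Fin d) ℝ :=
  ∑ x ∈ ξ.pts, ξ.w x • M x

/-- Gradient vector of the Emax model. -/
noncomputable def fEmax (θ₂ θ₃ : ℝ) (x : ℝ) : Fin 3 → ℝ :=
  ![1, x / (x + θ₃), -θ₂ * x / (x + θ₃) ^ 2]

/-- Single-observation information matrix of the Emax model. -/
noncomputable def emaxInfo (θ₂ θ₃ : ℝ) (x : ℝ) : Matrix (Fin 3) (Fin 3) ℝ :=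
  Matrix.vecMulVec (fEmax θ₂ θ₃ x) (fEmax θ₂ θ₃ x)

open Matrix Finset

/-- The interior optimal point. -/
noncomputable def xst (L U c : ℝ) : ℝ := (L*(U+c)+U*(L+c))/(L+U+2*c)

/-- Affinely rescaled coordinate `t ∈ [-1,1]` corresponding to `u = x/(x+c)`. -/
noncomputable def tf (L U c x : ℝ) : ℝ := (L+U+2*c)*(x - xst L U c)/((x+c)*(U-L))

/-- Lagrange basis (at the optimal nodes) evaluated at `x`. -/
noncomputable def lv (L U c x : ℝ) : Fin 3 → ℝ :=
  ![tf L U c x * (tf L U c x - 1)/2, 1 - (tf L U c x)^2, tf L U c x * (tf L U c x + 1)/2]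

/-- Matrix whose columns are the gradient vectors at the three optimal nodes. -/
noncomputable def Amat (θ₂ L U c : ℝ) : Matrix (Fin 3) (Fin 3) ℝ :=
  Matrix.of fun i j => fEmax θ₂ c (![L, xst L U c, U] j) i

lemma detBound (p q r d e g : ℝ) (hp : 0 ≤ p) (hq : 0 ≤ q) (hr : 0 ≤ r)
    (hsum : p + q + r ≤ 1) (hd : d^2 ≤ p*q) (he : e^2 ≤ p*r) (hg : g^2 ≤ q*r) :
    p*q*r - p*g^2 - q*e^2 - r*d^2 + 2*(d*e*g) ≤ 1/27 := by
  have A1 : 0 ≤ p*g^2 + r*d^2 := by positivity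
  have A2 : (2*(d*e*g))^2 ≤ (p*g^2 + r*d^2)^2 := by
    nlinarith [sq_nonneg (p*g^2 - r*d^2),
      mul_nonneg (by positivity : (0:ℝ) ≤ 4*(d*g)^2) (by linarith : (0:ℝ) ≤ p*r - e^2)]
  have A3 : 2*(d*e*g) ≤ p*g^2 + r*d^2 := by nlinarith [A1, A2]
  have A4 : p*q*r ≤ 1/27 := by
    have h27 : 27*(p*q*r) ≤ (p+q+r)^3 := by
      nlinarith [sq_nonneg (p-q), sq_nonneg (q-r), sq_nonneg (p-r), mul_nonneg hp hq,
        mul_nonneg hq hr, mul_nonneg hp hr]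
    have h1 : (p+q+r)^3 ≤ 1 := pow_le_one₀ (by linarith) hsum
    linarith
  nlinarith [mul_nonneg hq (sq_nonneg e)]

lemma vecMulVec_mulVec (A : Matrix (Fin 3) (Fin 3) ℝ) (v : Fin 3 → ℝ) :
    Matrix.vecMulVec (A.mulVec v) (A.mulVec v) = A * Matrix.vecMulVec v v * Aᵀ := by
  ext i j
  simp only [Matrix.vecMulVec_apply, Matrix.mul_apply, Matrix.transpose_apply, Matrix.mulVec,
    dotProduct, Fin.sum_univ_three]
  ring

lemma tf_mem (L U c x : ℝ) (hc : 0 < c) (hL : 0 < L) (hLU : L < U)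
    (hx1 : L ≤ x) (hx2 : x ≤ U) : -1 ≤ tf L U c x ∧ tf L U c x ≤ 1 := by
  have h1 : x + c ≠ 0 := by nlinarith
  have h2 : U - L ≠ 0 := by nlinarith
  have h3 : L + U + 2*c ≠ 0 := by nlinarith
  have hd : 0 < (x+c)*(U-L) := by nlinarith
  have e1 : tf L U c x + 1 = 2*(U+c)*(x-L)/((x+c)*(U-L)) := by
    unfold tf xst; field_simp; ring
  have e2 : 1 - tf L U c x = 2*(L+c)*(U-x)/((x+c)*(U-L)) := by
    unfold tf xst; field_simp; ring
  constructor
  · have : 0 ≤ 2*(U+c)*(x-L)/((x+c)*(U-L)) := by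
      apply div_nonneg _ hd.le; nlinarith
    linarith [e1 ▸ this]
  · have : 0 ≤ 2*(L+c)*(U-x)/((x+c)*(U-L)) := by
      apply div_nonneg _ hd.le; nlinarith
    linarith [e2 ▸ this]

lemma lv_sumsq (L U c x : ℝ) (hc : 0 < c) (hL : 0 < L) (hLU : L < U)
    (hx1 : L ≤ x) (hx2 : x ≤ U) :
    lv L U c x 0 * lv L U c x 0 + lv L U c x 1 * lv L U c x 1
      + lv L U c x 2 * lv L U c x 2 ≤ 1 := by
  obtain ⟨h1, h2⟩ := tf_mem L U c x hc hL hLU hx1 hx2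
  set t := tf L U c x with ht
  simp only [lv, ← ht, Matrix.cons_val_zero, Matrix.cons_val_one, Matrix.head_cons,
    Matrix.cons_val_two, Matrix.tail_cons]
  nlinarith [mul_nonneg (mul_nonneg (sq_nonneg t) (by linarith : (0:ℝ) ≤ 1-t))
    (by linarith : (0:ℝ) ≤ 1+t)]

lemma fdecomp (θ₂ L U c x : ℝ) (hc : 0 < c) (hL : 0 < L) (hLU : L < U) (hx1 : L ≤ x) :
    fEmax θ₂ c x = (Amat θ₂ L U c).mulVec (lv L U c x) := by
  have hc0 : c ≠ 0 := ne_of_gt hc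
  have h1 : x + c ≠ 0 := by nlinarith
  have h2 : U - L ≠ 0 := by nlinarith
  have h3 : L + U + 2*c ≠ 0 := by nlinarith
  have h4 : L + c ≠ 0 := by nlinarith
  have h5 : U + c ≠ 0 := by nlinarith
  have hxc : xst L U c + c = 2*((L+c)*(U+c))/(L+U+2*c) := by
    unfold xst; rw [div_add' _ _ _ h3, div_eq_div_iff h3 h3]; ring
  have h6 : xst L U c + c ≠ 0 := by
    rw [hxc]
    positivity
  have hnum : (L+U+2*c)*(x - xst L U c) = (L+U+2*c)*x - (2*L*U + c*(L+U)) := by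
    unfold xst; field_simp; ring
  have htf : tf L U c x = ((L+U+2*c)*x - (2*L*U + c*(L+U))) / ((x+c)*(U-L)) := by
    unfold tf; rw [hnum]
  have hm : xst L U c / (xst L U c + c) = (L/(L+c) + U/(U+c))/2 := by
    rw [hxc]; unfold xst; rw [div_div_div_cancel_right₀ h3]; field_simp
  have hu : x/(x+c) = (L/(L+c) + U/(U+c))/2 + tf L U c x * (U/(U+c) - L/(L+c))/2 := by
    rw [htf]; field_simp; ring
  have quad : ∀ y : ℝ, y + c ≠ 0 → y/(y+c)^2 = (y/(y+c))*(1 - y/(y+c))/c := by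
    intro y hy; field_simp; ring
  funext i
  fin_cases i
  · simp only [Amat, fEmax, lv, Matrix.mulVec, dotProduct, Fin.sum_univ_three,
      Matrix.of_apply, Matrix.cons_val_zero, Matrix.cons_val_one, Matrix.head_cons,
      Matrix.cons_val_two, Matrix.tail_cons, Fin.isValue, Fin.zero_eta, Fin.mk_one, Fin.reduceFinMk]
    ring
  · simp only [Amat, fEmax, lv, Matrix.mulVec, dotProduct, Fin.sum_univ_three,
      Matrix.of_apply, Matrix.cons_val_zero, Matrix.cons_val_one, Matrix.head_cons,
      Matrix.cons_val_two, Matrix.tail_cons, Fin.isValue, Fin.zero_eta, Fin.mk_one, Fin.reduceFinMk]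
    rw [hm, hu]
    ring
  · simp only [Amat, fEmax, lv, Matrix.mulVec, dotProduct, Fin.sum_univ_three,
      Matrix.of_apply, Matrix.cons_val_zero, Matrix.cons_val_one, Matrix.head_cons,
      Matrix.cons_val_two, Matrix.tail_cons, Fin.isValue, Fin.zero_eta, Fin.mk_one, Fin.reduceFinMk]
    simp only [mul_div_assoc]
    rw [quad x h1, quad L h4, quad U h5, quad (xst L U c) h6, hm, hu]
    ring

lemma sumAAT (θ₂ L U c : ℝ) :
    emaxInfo θ₂ c L + emaxInfo θ₂ c (xst L U c) + emaxInfo θ₂ c U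
      = Amat θ₂ L U c * (Amat θ₂ L U c)ᵀ := by
  ext i j
  simp only [emaxInfo, Amat, Matrix.add_apply, Matrix.vecMulVec_apply, Matrix.mul_apply,
    Matrix.transpose_apply, Fin.sum_univ_three, Matrix.of_apply, Matrix.cons_val_zero,
    Matrix.cons_val_one, Matrix.head_cons, Matrix.cons_val_two, Matrix.tail_cons]

/-- the design with weight 1/3 at each of `L`, `x_E*`, `U` is D-optimal
for the Emax model, and `L < x_E* < U`. -/
theorem stmt9 (θ₁ θ₂ θ₃ : ℝ) (hθ₂ : 0 < θ₂) (hθ₃ : 0 < θ₃) (L U : ℝ)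
    (hL : 0 < L) (hLU : L < U) :
    (∀ ξ : Design (Set.Icc L U),
      (infoMat (emaxInfo θ₂ θ₃) ξ).det ≤
        ((1 / 3 : ℝ) • emaxInfo θ₂ θ₃ L +
          (1 / 3 : ℝ) • emaxInfo θ₂ θ₃ ((L * (U + θ₃) + U * (L + θ₃)) / (L + U + 2 * θ₃)) +
          (1 / 3 : ℝ) • emaxInfo θ₂ θ₃ U).det) ∧
    L < (L * (U + θ₃) + U * (L + θ₃)) / (L + U + 2 * θ₃) ∧
    (L * (U + θ₃) + U * (L + θ₃)) / (L + U + 2 * θ₃) < U := by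
  have hxstd : (L * (U + θ₃) + U * (L + θ₃)) / (L + U + 2 * θ₃) = xst L U θ₃ := rfl
  have hden : (0:ℝ) < L + U + 2 * θ₃ := by nlinarith
  refine ⟨?_, ?_, ?_⟩
  · intro ξ
    set A := Amat θ₂ L U θ₃ with hA
    set N : Matrix (Fin 3) (Fin 3) ℝ :=
      ∑ x ∈ ξ.pts, ξ.w x • Matrix.vecMulVec (lv L U θ₃ x) (lv L U θ₃ x) with hN
    -- decomposition of the information matrix
    have hMξ : infoMat (emaxInfo θ₂ θ₃) ξ = A * N * Aᵀ := by
      calc infoMat (emaxInfo θ₂ θ₃) ξ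
          = ∑ x ∈ ξ.pts, A * (ξ.w x • Matrix.vecMulVec (lv L U θ₃ x) (lv L U θ₃ x)) * Aᵀ := by
            refine Finset.sum_congr rfl fun x hx => ?_
            have hmem := ξ.mem_pts x hx
            rw [emaxInfo, fdecomp θ₂ L U θ₃ x hθ₃ hL hLU hmem.1, ← hA, vecMulVec_mulVec,
              Matrix.mul_smul, Matrix.smul_mul]
        _ = A * N * Aᵀ := by rw [hN, Matrix.mul_sum, Matrix.sum_mul]
    -- entries of N
    have hNij : ∀ i j, N i j = ∑ x ∈ ξ.pts, ξ.w x * (lv L U θ₃ x i * lv L U θ₃ x j) := by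
      intro i j
      rw [hN]
      simp [Matrix.sum_apply, Matrix.vecMulVec_apply, smul_eq_mul]
    have hdiag : ∀ i, 0 ≤ N i i := fun i => by
      rw [hNij]
      exact Finset.sum_nonneg fun x hx => mul_nonneg (ξ.w_nonneg x hx) (mul_self_nonneg _)
    have htr : N 0 0 + N 1 1 + N 2 2 ≤ 1 := by
      rw [hNij, hNij, hNij, ← Finset.sum_add_distrib, ← Finset.sum_add_distrib]
      calc ∑ x ∈ ξ.pts, (ξ.w x * (lv L U θ₃ x 0 * lv L U θ₃ x 0)
              + ξ.w x * (lv L U θ₃ x 1 * lv L U θ₃ x 1)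
              + ξ.w x * (lv L U θ₃ x 2 * lv L U θ₃ x 2))
          ≤ ∑ x ∈ ξ.pts, ξ.w x := by
            refine Finset.sum_le_sum fun x hx => ?_
            have hmem := ξ.mem_pts x hx
            have hs := lv_sumsq L U θ₃ x hθ₃ hL hLU hmem.1 hmem.2
            nlinarith [ξ.w_nonneg x hx]
        _ = 1 := ξ.w_sum
    have hCS : ∀ i j, (N i j)^2 ≤ N i i * N j j := by
      intro i j
      rw [hNij, hNij, hNij]
      have e1 : ∀ k l : Fin 3, ∑ x ∈ ξ.pts, (Real.sqrt (ξ.w x) * lv L U θ₃ x k) *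
          (Real.sqrt (ξ.w x) * lv L U θ₃ x l) = ∑ x ∈ ξ.pts, ξ.w x * (lv L U θ₃ x k * lv L U θ₃ x l) := by
        intro k l
        refine Finset.sum_congr rfl fun x hx => ?_
        have hw : Real.sqrt (ξ.w x) * Real.sqrt (ξ.w x) = ξ.w x :=
          Real.mul_self_sqrt (ξ.w_nonneg x hx)
        calc (Real.sqrt (ξ.w x) * lv L U θ₃ x k) * (Real.sqrt (ξ.w x) * lv L U θ₃ x l)
            = (Real.sqrt (ξ.w x) * Real.sqrt (ξ.w x)) * (lv L U θ₃ x k * lv L U θ₃ x l) := by ring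
          _ = ξ.w x * (lv L U θ₃ x k * lv L U θ₃ x l) := by rw [hw]
      have e2 : ∀ k : Fin 3, ∑ x ∈ ξ.pts, (Real.sqrt (ξ.w x) * lv L U θ₃ x k)^2
          = ∑ x ∈ ξ.pts, ξ.w x * (lv L U θ₃ x k * lv L U θ₃ x k) := by
        intro k
        rw [← e1 k k]
        exact Finset.sum_congr rfl fun x _ => by ring
      calc (∑ x ∈ ξ.pts, ξ.w x * (lv L U θ₃ x i * lv L U θ₃ x j))^2
          = (∑ x ∈ ξ.pts, (Real.sqrt (ξ.w x) * lv L U θ₃ x i) *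
              (Real.sqrt (ξ.w x) * lv L U θ₃ x j))^2 := by rw [e1]
        _ ≤ (∑ x ∈ ξ.pts, (Real.sqrt (ξ.w x) * lv L U θ₃ x i)^2) *
            (∑ x ∈ ξ.pts, (Real.sqrt (ξ.w x) * lv L U θ₃ x j)^2) :=
            Finset.sum_mul_sq_le_sq_mul_sq _ _ _
        _ = (∑ x ∈ ξ.pts, ξ.w x * (lv L U θ₃ x i * lv L U θ₃ x i)) *
            (∑ x ∈ ξ.pts, ξ.w x * (lv L U θ₃ x j * lv L U θ₃ x j)) := by rw [e2, e2]
    have hsym : ∀ i j, N i j = N j i := by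
      intro i j
      rw [hNij, hNij]
      exact Finset.sum_congr rfl fun x _ => by ring
    have hdetN : N.det ≤ 1/27 := by
      rw [Matrix.det_fin_three]
      have hb := detBound (N 0 0) (N 1 1) (N 2 2) (N 0 1) (N 0 2) (N 1 2)
        (hdiag 0) (hdiag 1) (hdiag 2) htr (hCS 0 1) (hCS 0 2) (hCS 1 2)
      rw [hsym 1 0, hsym 2 0, hsym 2 1]
      nlinarith [hb]
    -- right hand side
    rw [hxstd]
    have hRHS : (1/3:ℝ) • emaxInfo θ₂ θ₃ L + (1/3:ℝ) • emaxInfo θ₂ θ₃ (xst L U θ₃)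
        + (1/3:ℝ) • emaxInfo θ₂ θ₃ U = (1/3:ℝ) • (A * Aᵀ) := by
      rw [← smul_add, ← smul_add, sumAAT]
    rw [hRHS, hMξ]
    have hdet3 : ((1/3:ℝ) • (A * Aᵀ)).det = (1/3:ℝ)^3 * (A.det * A.det) := by
      rw [Matrix.det_smul, Matrix.det_mul, Matrix.det_transpose]
      norm_num
    rw [hdet3, Matrix.det_mul, Matrix.det_mul, Matrix.det_transpose]
    have hA2 : 0 ≤ A.det * A.det := mul_self_nonneg _
    have := mul_le_mul_of_nonneg_left hdetN hA2
    nlinarith [this]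
  · rw [lt_div_iff₀ hden]
    nlinarith
  · rw [div_lt_iff₀ hden]
    nlinarith
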